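/- Let H : ℝⁿ × ℝᵐ → ℝ be such that, for a fixed y ∈ ℝᵐ, the function x ↦ H(x,y) is differentiable with gradient ∇_x H(·, y) Lipschitz continuous with constant L > 0, let f₁ : ℝⁿ → ℝ, let α > 0, and fix x_k ∈ ℝⁿ. Suppose x₊ ∈ ℝⁿ is a global minimizer over w ∈ ℝⁿ of the proximal subproblem w ↦ f₁(w) + ⟨∇_x H(x_k, y), w − x_k⟩ + (1/(2α))‖w − x_k‖₂². Then, writing Ψ₁(x,y) = H(x,y) + f₁(x), the descent inequality Ψ₁(x₊, y) ≤ Ψ₁(x_k, y) − (1/2)(1/α − L)‖x₊ − x_k‖₂² holds. -/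

import Mathlib

open RealInnerProductSpace

/-- Descent lemma for a proximal gradient step: if `x₊` globally minimizes the proximal
subproblem `w ↦ f₁(w) + ⟨∇_x H(x_k,y), w − x_k⟩ + (1/(2α))‖w − x_k‖²` and
`∇_x H(·,y)` is `L`-Lipschitz, then
`Ψ₁(x₊,y) ≤ Ψ₁(x_k,y) − ½(1/α − L)‖x₊ − x_k‖²` where `Ψ₁ = H + f₁`. -/
theorem prox_gradient_descent_lemma
    {n m : ℕ}
    (H : EuclideanSpace ℝ (Fin n) → EuclideanSpace ℝ (Fin m) → ℝ)
    (y : EuclideanSpace ℝ (Fin m))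
    (g : EuclideanSpace ℝ (Fin n) → EuclideanSpace ℝ (Fin n))
    (L : ℝ) (hL : 0 < L)
    (hgrad : ∀ x, HasGradientAt (fun u => H u y) (g x) x)
    (hLip : ∀ u v, ‖g u - g v‖ ≤ L * ‖u - v‖)
    (f₁ : EuclideanSpace ℝ (Fin n) → ℝ)
    (α : ℝ) (hα : 0 < α)
    (xk xp : EuclideanSpace ℝ (Fin n))
    (hmin : ∀ w, f₁ xp + ⟪g xk, xp - xk⟫ + 1 / (2 * α) * ‖xp - xk‖ ^ 2 ≤
      f₁ w + ⟪g xk, w - xk⟫ + 1 / (2 * α) * ‖w - xk‖ ^ 2) :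
    H xp y + f₁ xp ≤ H xk y + f₁ xk - 1 / 2 * (1 / α - L) * ‖xp - xk‖ ^ 2 := by
  set d := xp - xk with hd
  -- g is continuous (Lipschitz)
  have hgcont : Continuous g := by
    refine (LipschitzWith.of_dist_le_mul (K := ⟨L, hL.le⟩) ?_).continuous
    intro u v
    show dist (g u) (g v) ≤ L * dist u v
    simpa [dist_eq_norm] using hLip u v
  -- derivative along the segment
  have hline : ∀ t : ℝ, HasDerivAt (fun t : ℝ => xk + t • d) d t := by
    intro t
    simpa using ((hasDerivAt_id t).smul_const d).const_add xk
  have hderiv : ∀ t : ℝ,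
      HasDerivAt (fun t : ℝ => H (xk + t • d) y) ⟪g (xk + t • d), d⟫ t := by
    intro t
    have h2 := (hasGradientAt_iff_hasFDerivAt.mp (hgrad (xk + t • d))).comp_hasDerivAt
      t (hline t)
    exact h2
  have hcont : Continuous fun t : ℝ => ⟪g (xk + t • d), d⟫ := by
    exact (hgcont.comp (by continuity)).inner continuous_const
  have hint : ∫ t in (0:ℝ)..1, ⟪g (xk + t • d), d⟫ = H xp y - H xk y := by
    have := intervalIntegral.integral_eq_sub_of_hasDerivAt
      (f := fun t : ℝ => H (xk + t • d) y)
      (fun t _ => hderiv t) (hcont.intervalIntegrable 0 1)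
    simpa [hd] using this
  -- pointwise bound on [0,1]
  have hbound : ∀ t ∈ Set.Icc (0:ℝ) 1,
      ⟪g (xk + t • d), d⟫ ≤ ⟪g xk, d⟫ + L * t * ‖d‖ ^ 2 := by
    intro t ht
    have h1 : ⟪g (xk + t • d) - g xk, d⟫ ≤ ‖g (xk + t • d) - g xk‖ * ‖d‖ :=
      real_inner_le_norm _ _
    have h2 : ‖g (xk + t • d) - g xk‖ ≤ L * (t * ‖d‖) := by
      have := hLip (xk + t • d) xk
      simpa [norm_smul, abs_of_nonneg ht.1] using this
    have h3 : ⟪g (xk + t • d) - g xk, d⟫ ≤ L * t * ‖d‖ ^ 2 := by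
      calc ⟪g (xk + t • d) - g xk, d⟫ ≤ ‖g (xk + t • d) - g xk‖ * ‖d‖ := h1
        _ ≤ L * (t * ‖d‖) * ‖d‖ := by
            exact mul_le_mul_of_nonneg_right h2 (norm_nonneg _)
        _ = L * t * ‖d‖ ^ 2 := by ring
    have := inner_sub_left (𝕜 := ℝ) (g (xk + t • d)) (g xk) d
    linarith [this ▸ h3]
  -- integrate the bound
  have hmono : ∫ t in (0:ℝ)..1, ⟪g (xk + t • d), d⟫ ≤
      ∫ t in (0:ℝ)..1, (⟪g xk, d⟫ + L * t * ‖d‖ ^ 2) := by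
    apply intervalIntegral.integral_mono_on (by norm_num)
      (hcont.intervalIntegrable 0 1) ((continuous_const.add ((continuous_const.mul continuous_id).mul
        continuous_const) : Continuous fun t : ℝ =>
        ⟪g xk, d⟫ + L * t * ‖d‖ ^ 2).intervalIntegrable 0 1)
    exact hbound
  have hrhs : ∫ t in (0:ℝ)..1, (⟪g xk, d⟫ + L * t * ‖d‖ ^ 2) =
      ⟪g xk, d⟫ + L / 2 * ‖d‖ ^ 2 := by
    rw [intervalIntegral.integral_add (f := fun _ : ℝ => ⟪g xk, d⟫) (g := fun t : ℝ => L * t * ‖d‖ ^ 2)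
      (intervalIntegrable_const)
      (((continuous_const.mul continuous_id').mul continuous_const : Continuous fun t : ℝ =>
        L * t * ‖d‖ ^ 2).intervalIntegrable 0 1)]
    have : ∫ t in (0:ℝ)..1, L * t * ‖d‖ ^ 2 = L / 2 * ‖d‖ ^ 2 := by
      have : (fun t : ℝ => L * t * ‖d‖ ^ 2) = fun t : ℝ => (L * ‖d‖ ^ 2) * t := by
        funext t; ring
      rw [this, intervalIntegral.integral_const_mul, integral_id]
      ring
    rw [this]
    simp
  have hdescent : H xp y ≤ H xk y + ⟪g xk, d⟫ + L / 2 * ‖d‖ ^ 2 := by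
    have := hmono
    rw [hint, hrhs] at this
    linarith
  have hm := hmin xk
  simp only [sub_self, norm_zero, inner_zero_right] at hm
  have hα2 : 0 < 2 * α := by linarith
  have : f₁ xp + ⟪g xk, d⟫ + 1 / (2 * α) * ‖d‖ ^ 2 ≤ f₁ xk := by
    simpa [hd] using hm
  have hfin : 1 / (2 * α) * ‖d‖ ^ 2 = 1 / 2 * (1 / α) * ‖d‖ ^ 2 := by
    field_simp
  linarith
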